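/- Let P be a convex d-polytope in E^d. Then for all sufficiently large k ∈ ℕ, the matrix A_k := [((1/deg(v)) Σ_{F facet containing v} (1 − q_F(w))^{2k})^{2k}]_{w,v ∈ vert(P)} is invertible, and there exist unique scalars y_{v,k} > 0 (v ∈ vert(P)), determined from A_k y_k = 𝟙, such that the polynomial f_k(x) := Σ_{v ∈ vert(P)} y_{v,k} ((1/deg(v)) Σ_{F facet containing v} (1 − q_F(x))^{2k})^{2k} satisfies f_k(w) = 1 for every vertex w of P. -/

import Mathlib

noncomputable section

open Metric Set Finset Matrix
open scoped RealInnerProductSpace BigOperators Classical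

namespace AverkovHenk

abbrev E (d : ℕ) := EuclideanSpace ℝ (Fin d)

/-- Support function `h(P,u)` of `P` in direction `u`. -/
def supp {d : ℕ} (P : Set (E d)) (u : E d) : ℝ :=
  sSup ((fun x => ⟪u, x⟫) '' P)

/-- The normalized affine function `q_F` of the facet with outward unit normal `u`. -/
def qf {d : ℕ} (P : Set (E d)) (u : E d) (x : E d) : ℝ :=
  (supp P u - ⟪u, x⟫) / Metric.diam P

/-- The exposed face of `P` in direction `u`. -/
def faceOf {d : ℕ} (P : Set (E d)) (u : E d) : Set (E d) :=
  {x ∈ P | ⟪u, x⟫ = supp P u}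

/-- `u` is an outward unit normal of a facet (a `(d-1)`-dimensional face) of `P`. -/
def IsFacetNormal {d : ℕ} (P : Set (E d)) (u : E d) : Prop :=
  ‖u‖ = 1 ∧ Module.finrank ℝ ↥(vectorSpan ℝ (faceOf P u)) = d - 1

/-- The vertices of `P`, i.e. its extreme points. -/
def vertices {d : ℕ} (P : Set (E d)) : Set (E d) := Set.extremePoints ℝ P

/-- The `l`-th elementary symmetric function of `y_1, …, y_m`. -/
def esymm {m : ℕ} (y : Fin m → ℝ) (l : ℕ) : ℝ :=
  ∑ J ∈ Finset.powersetCard l (Finset.univ : Finset (Fin m)), ∏ j ∈ J, y j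

/-- A presentation of a convex `d`-polytope `P ⊆ E^d` by the `m` outward unit normals
`u 0, …, u (m-1)` of its facets, together with the induced representation
`P = {x | q_j(x) ≥ 0 for all j}`. -/
structure FacetRep (d m : ℕ) where
  P : Set (E d)
  u : Fin m → E d
  convex : Convex ℝ P
  compact : IsCompact P
  fulldim : (interior P).Nonempty
  inj : Function.Injective u
  facet : ∀ j, IsFacetNormal P (u j)
  complete : ∀ w : E d, IsFacetNormal P w → ∃ j, w = u j
  rep : P = {x | ∀ j, 0 ≤ qf P (u j) x}

namespace FacetRep

variable {d m : ℕ}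

/-- The vector `q(x) = (q_1(x), …, q_m(x))`. -/
def q (R : FacetRep d m) (x : E d) : Fin m → ℝ := fun j => qf R.P (R.u j) x

/-- The indices of the facets containing the point `v`. -/
def act (R : FacetRep d m) (v : E d) : Finset (Fin m) :=
  Finset.univ.filter fun j => R.q v j = 0

/-- The polytope is simple: each vertex lies on exactly `d` facets. -/
def Simple (R : FacetRep d m) : Prop :=
  ∀ v ∈ vertices R.P, (R.act v).card = d

/-- The enlarged polytope `P_ε`. -/
def Peps (R : FacetRep d m) (ε : ℝ) : Set (E d) := {x | ∀ j, -ε ≤ R.q x j}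

/-- The box `Π_{v,ε} = {x : |q_v(x)|_∞ ≤ ε}`. -/
def Piv (R : FacetRep d m) (v : E d) (ε : ℝ) : Set (E d) :=
  {x | ∀ j ∈ R.act v, |R.q x j| ≤ ε}

/-- The cone `C_v = {x : -σ_1(q_v(x)) ≥ (2/3)|q_v(x)|}` (Euclidean norm). -/
def Cv (R : FacetRep d m) (v : E d) : Set (E d) :=
  {x | (2/3) * Real.sqrt (∑ j ∈ R.act v, (R.q x j)^2) ≤ -(∑ j ∈ R.act v, R.q x j)}

/-- The polytope `P^v_{ε,δ}`. -/
def Pv (R : FacetRep d m) (v : E d) (ε δ : ℝ) : Set (E d) :=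
  {x | (∀ j ∈ R.act v, -ε ≤ R.q x j) ∧ ∀ j ∉ R.act v, δ ≤ R.q x j}

/-- `γ = max{1 - q_F(v) : F a facet, v a vertex not on F}`. -/
def gam (R : FacetRep d m) : ℝ :=
  sSup {c | ∃ v ∈ vertices R.P, ∃ j, R.q v j ≠ 0 ∧ c = 1 - R.q v j}

/-- The polynomial `f_k` built from weights `y_v` over the vertex set `V`. -/
def fk (R : FacetRep d m) (V : Finset (E d)) (y : ↥V → ℝ) (k : ℕ) (x : E d) : ℝ :=
  ∑ v : ↥V, y v * ((∑ j ∈ R.act v.1, (1 - R.q x j)^(2*k)) / (R.act v.1).card)^(2*k)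

/-- The matrix `A_k` indexed by the vertex set `V`. -/
def Ak (R : FacetRep d m) (V : Finset (E d)) (k : ℕ) : Matrix ↥V ↥V ℝ :=
  Matrix.of fun w v : ↥V => ((∑ j ∈ R.act v.1, (1 - R.q w.1 j)^(2*k)) / (R.act v.1).card)^(2*k)

/-- `deg(P)`: the maximal number of facets through a vertex. -/
def degP (R : FacetRep d m) (V : Finset (E d)) : ℕ := V.sup fun v => (R.act v).card

end FacetRep

/-- `|U_s^{-1}|_2` where `U_s` is the matrix with rows `u_j^T`, `j ∈ s`: the supremum of `‖x‖`
over the set where the Euclidean norm of `U_s x` is at most `1`. -/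
def invNormU {d m : ℕ} (u : Fin m → E d) (s : Finset (Fin m)) : ℝ :=
  sSup {c | ∃ x : E d, Real.sqrt (∑ j ∈ s, (⟪u j, x⟫)^2) ≤ 1 ∧ c = ‖x‖}

/-- `α = max_{v ∈ vert(P)} |U_v^{-1}|_2`. -/
def alpha {d m : ℕ} (R : FacetRep d m) (V : Finset (E d)) : ℝ :=
  sSup {a | ∃ v ∈ V, a = invNormU R.u (R.act v)}

/-- The normal cone `N(Q,x) = {u : ⟨x,u⟩ = h(Q,u)}`. -/
def normalCone {d : ℕ} (Q : Set (E d)) (x : E d) : Set (E d) :=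
  {u | ⟪u, x⟫ = supp Q u}

/-- `S` is an edge (a 1-dimensional face) of `P`. -/
def IsEdgeOf {d : ℕ} (P S : Set (E d)) : Prop :=
  IsExposed ℝ P S ∧ Module.finrank ℝ ↥(vectorSpan ℝ S) = 1

/-! ### Auxiliary lemmas for Statement 7 -/

section Aux

variable {d m : ℕ}

lemma mem_act_iff (R : FacetRep d m) {v : E d} {j : Fin m} :
    j ∈ R.act v ↔ R.q v j = 0 := by
  simp [FacetRep.act]

lemma q_nonneg (R : FacetRep d m) {x : E d} (hx : x ∈ R.P) (j : Fin m) :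
    0 ≤ R.q x j := by
  rw [R.rep] at hx
  exact hx j

lemma u_norm (R : FacetRep d m) (j : Fin m) : ‖R.u j‖ = 1 := (R.facet j).1

lemma q_affine (R : FacetRep d m) (x y : E d) (t : ℝ) (j : Fin m) :
    R.q (x + t • y) j = R.q x j - t * ⟪R.u j, y⟫ / Metric.diam R.P := by
  simp only [FacetRep.q, qf, inner_add_right, real_inner_smul_right]
  ring

lemma diam_pos (R : FacetRep d m) (hd : 1 ≤ d) : 0 < Metric.diam R.P := by
  obtain ⟨x, hx⟩ := R.fulldim
  rw [mem_interior_iff_mem_nhds, Metric.mem_nhds_iff] at hx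
  obtain ⟨ρ, hρ, hball⟩ := hx
  set e : E d := EuclideanSpace.single (⟨0, by omega⟩ : Fin d) (1 : ℝ) with he
  have hne : ‖e‖ = 1 := by rw [he, EuclideanSpace.norm_single]; norm_num
  have h1 : x ∈ R.P := hball (Metric.mem_ball_self hρ)
  have h2 : x + (ρ/2) • e ∈ R.P := by
    apply hball
    rw [Metric.mem_ball, dist_comm, dist_self_add_right, norm_smul, hne]
    rw [Real.norm_eq_abs, abs_of_pos (by linarith)]
    linarith
  have := Metric.dist_le_diam_of_mem R.compact.isBounded h1 h2
  rw [dist_self_add_right, norm_smul, hne, Real.norm_eq_abs, abs_of_pos (by linarith)] at this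
  linarith

lemma q_le_one (R : FacetRep d m) (hdiam : 0 < Metric.diam R.P) {x : E d}
    (hx : x ∈ R.P) (j : Fin m) : R.q x j ≤ 1 := by
  show qf R.P (R.u j) x ≤ 1
  rw [qf, div_le_one hdiam, sub_le_iff_le_add]
  show sSup ((fun x => ⟪R.u j, x⟫) '' R.P) ≤ _
  apply csSup_le (Set.Nonempty.image _ ⟨x, hx⟩)
  rintro b ⟨y, hy, rfl⟩
  have h1 : ⟪R.u j, y - x⟫ ≤ ‖R.u j‖ * ‖y - x‖ := real_inner_le_norm _ _
  rw [u_norm, one_mul, ← dist_eq_norm] at h1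
  have h2 : dist y x ≤ Metric.diam R.P :=
    Metric.dist_le_diam_of_mem R.compact.isBounded hy hx
  have h3 : ⟪R.u j, y - x⟫ = ⟪R.u j, y⟫ - ⟪R.u j, x⟫ := inner_sub_right _ _ _
  simp only [h3] at h1
  linarith

lemma exists_pos_q (R : FacetRep d m) (hdiam : 0 < Metric.diam R.P) {v w : E d}
    (hv : v ∈ vertices R.P) (hw : w ∈ R.P) (hwv : w ≠ v) :
    ∃ j ∈ R.act v, 0 < R.q w j := by
  by_contra hcon
  push_neg at hcon
  have hq0 : ∀ j : Fin m, R.q v j = 0 → R.q w j = 0 := fun j hj =>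
    le_antisymm (hcon j ((mem_act_iff R).2 hj)) (q_nonneg R hw j)
  have hvP : v ∈ R.P := extremePoints_subset hv
  set F : Finset (Fin m) := Finset.univ.filter fun j => R.q v j ≠ 0 with hF
  set t : ℝ := (insert (1:ℝ) (F.image (R.q v))).min' ⟨1, Finset.mem_insert_self _ _⟩ with htdef
  have ht0 : 0 < t := by
    rw [htdef]
    refine (Finset.lt_min'_iff _ _).2 ?_
    intro a ha
    rcases Finset.mem_insert.1 ha with h | h
    · rw [h]; norm_num
    · obtain ⟨j, hj, rfl⟩ := Finset.mem_image.1 h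
      have hj' : R.q v j ≠ 0 := (Finset.mem_filter.1 hj).2
      exact lt_of_le_of_ne (q_nonneg R hvP j) (Ne.symm hj')
  have htle : ∀ j : Fin m, R.q v j ≠ 0 → t ≤ R.q v j := by
    intro j hj
    apply Finset.min'_le
    exact Finset.mem_insert_of_mem (Finset.mem_image.2 ⟨j, Finset.mem_filter.2 ⟨Finset.mem_univ _, hj⟩, rfl⟩)
  set z : E d := v + t • (v - w) with hz
  have hzq : ∀ j : Fin m, R.q z j = (1+t) * R.q v j - t * R.q w j := by
    intro j
    rw [hz, q_affine]
    have h1 : ⟪R.u j, v - w⟫ / Metric.diam R.P = R.q w j - R.q v j := by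
      simp only [FacetRep.q, qf, inner_sub_right]
      ring
    rw [mul_div_assoc, h1]
    ring
  have hzP : z ∈ R.P := by
    rw [R.rep]
    intro j
    show 0 ≤ R.q z j
    rw [hzq j]
    by_cases hj : R.q v j = 0
    · rw [hj, hq0 j hj]; norm_num
    · have h1 : t ≤ R.q v j := htle j hj
      have h2 : R.q w j ≤ 1 := q_le_one R hdiam hw j
      have h3 : 0 ≤ R.q v j := q_nonneg R hvP j
      nlinarith [mul_le_mul_of_nonneg_left h2 (le_of_lt ht0), mul_nonneg (le_of_lt ht0) h3]
  have hseg : v ∈ openSegment ℝ w z := by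
    have h1t : (0:ℝ) < 1 + t := by linarith
    refine ⟨t/(1+t), 1/(1+t), by positivity, by positivity, by field_simp <;> ring, ?_⟩
    rw [hz]
    match_scalars <;> field_simp <;> ring
  exact hwv (hv.2 hw hzP hseg)

lemma act_nonempty (R : FacetRep d m) (hd : 1 ≤ d) (hdiam : 0 < Metric.diam R.P)
    {v : E d} (hv : v ∈ vertices R.P) : (R.act v).Nonempty := by
  by_contra h
  rw [Finset.not_nonempty_iff_eq_empty] at h
  have hvP : v ∈ R.P := extremePoints_subset hv
  have hpos : ∀ j : Fin m, 0 < R.q v j := by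
    intro j
    refine lt_of_le_of_ne (q_nonneg R hvP j) (Ne.symm fun hj => ?_)
    have : j ∈ R.act v := (mem_act_iff R).2 hj
    rw [h] at this
    exact absurd this (Finset.notMem_empty j)
  set e : E d := EuclideanSpace.single (⟨0, by omega⟩ : Fin d) (1 : ℝ) with he
  have hne : ‖e‖ = 1 := by rw [he, EuclideanSpace.norm_single]; norm_num
  have he0 : e ≠ 0 := by intro h0; rw [h0, norm_zero] at hne; norm_num at hne
  rcases isEmpty_or_nonempty (Fin m) with hm | hm
  · have hall : ∀ x : E d, x ∈ R.P := fun x => by rw [R.rep]; intro j; exact isEmptyElim j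
    have hseg : v ∈ openSegment ℝ (v + (-1 : ℝ) • e) (v + (1:ℝ) • e) :=
      ⟨1/2, 1/2, by norm_num, by norm_num, by norm_num, by module⟩
    have h2 := hv.2 (hall (v + (1:ℝ) • e)) (hall _) (by rw [openSegment_symm]; exact hseg)
    apply he0
    have : (1:ℝ) • e = 0 := by
      have := h2
      rwa [add_eq_left] at this
    rwa [one_smul] at this
  · set δ : ℝ := Finset.univ.inf' Finset.univ_nonempty (R.q v) with hδdef
    have hδ : 0 < δ := (Finset.lt_inf'_iff _).2 fun j _ => hpos j
    set t : ℝ := Metric.diam R.P * δ with htdef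
    have ht : 0 < t := by positivity
    have hmem : ∀ s : ℝ, |s| ≤ t → v + s • e ∈ R.P := by
      intro s hs
      rw [R.rep]
      intro j
      show 0 ≤ R.q (v + s • e) j
      rw [q_affine]
      have hip : |⟪R.u j, e⟫| ≤ 1 := by
        have := abs_real_inner_le_norm (R.u j) e
        rwa [u_norm, hne, one_mul] at this
      have h1 : |s * ⟪R.u j, e⟫ / Metric.diam R.P| ≤ δ := by
        rw [abs_div, abs_mul, abs_of_pos hdiam]
        rw [div_le_iff₀ hdiam]
        calc |s| * |⟪R.u j, e⟫| ≤ t * 1 :=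
              mul_le_mul hs hip (abs_nonneg _) (by linarith)
          _ = δ * Metric.diam R.P := by rw [htdef]; ring
      have h2 : δ ≤ R.q v j := Finset.inf'_le _ (Finset.mem_univ j)
      have h3 : s * ⟪R.u j, e⟫ / Metric.diam R.P ≤ δ := le_trans (le_abs_self _) h1
      linarith
    have h1 := hmem t (by rw [abs_of_pos ht])
    have h2 := hmem (-t) (by rw [abs_neg, abs_of_pos ht])
    have hseg : v ∈ openSegment ℝ (v + (-t) • e) (v + t • e) :=
      ⟨1/2, 1/2, by norm_num, by norm_num, by norm_num, by module⟩
    have h3 := hv.2 h1 h2 (by rw [openSegment_symm]; exact hseg)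
    apply he0
    have h4 : t • e = 0 := by rwa [add_eq_left] at h3
    rcases smul_eq_zero.1 h4 with h5 | h5
    · exact absurd h5 ht.ne'
    · exact h5

end Aux
lemma matrix_aux {I : Type*} [Fintype I] [DecidableEq I] [Nonempty I] (A : Matrix I I ℝ)
    (hdiag : ∀ i, A i i = 1) (h0 : ∀ i j, 0 ≤ A i j)
    (hsm : ∀ i j, i ≠ j → A i j ≤ (4 * (Fintype.card I : ℝ))⁻¹) :
    A.det ≠ 0 ∧ ∃! y : I → ℝ, (∀ i, 0 < y i) ∧ A *ᵥ y = 1 := by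
  set n : ℕ := Fintype.card I with hn
  have hn1 : 0 < n := Fintype.card_pos
  have hnR : (0:ℝ) < n := by exact_mod_cast hn1
  set ε : ℝ := (4 * (n:ℝ))⁻¹ with hε
  have hε0 : 0 < ε := by positivity
  have hεn : (n:ℝ) * ε = 1/4 := by rw [hε]; field_simp
  have hrow : ∀ i, ∑ j ∈ Finset.univ.erase i, ‖A i j‖ ≤ 1/4 := by
    intro i
    have h1 : ∑ j ∈ Finset.univ.erase i, ‖A i j‖ ≤ (Finset.univ.erase i).card • ε := by
      apply Finset.sum_le_card_nsmul
      intro j hj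
      rw [Real.norm_eq_abs, abs_of_nonneg (h0 _ _)]
      exact hsm i j (Ne.symm (Finset.mem_erase.1 hj).1)
    have h2 : ((Finset.univ.erase i).card : ℝ) ≤ n := by
      have := Finset.card_le_univ (Finset.univ.erase i)
      exact_mod_cast this
    calc ∑ j ∈ Finset.univ.erase i, ‖A i j‖ ≤ ((Finset.univ.erase i).card : ℝ) * ε := by
          rw [← nsmul_eq_mul]; exact h1
      _ ≤ (n:ℝ) * ε := by apply mul_le_mul_of_nonneg_right h2 hε0.le
      _ = 1/4 := hεn
  have hdet : A.det ≠ 0 := by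
    apply det_ne_zero_of_sum_row_lt_diag
    intro i
    calc ∑ j ∈ Finset.univ.erase i, ‖A i j‖ ≤ 1/4 := hrow i
      _ < ‖A i i‖ := by rw [hdiag i, norm_one]; norm_num
  have hu : IsUnit A.det := isUnit_iff_ne_zero.2 hdet
  set y : I → ℝ := A⁻¹ *ᵥ (1 : I → ℝ) with hy
  have hsol : A *ᵥ y = 1 := by
    rw [hy, Matrix.mulVec_mulVec, Matrix.mul_nonsing_inv _ hu, Matrix.one_mulVec]
  have huniq : ∀ z : I → ℝ, A *ᵥ z = 1 → z = y := by
    intro z hz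
    rw [hy, ← hz, Matrix.mulVec_mulVec, Matrix.nonsing_inv_mul _ hu, Matrix.one_mulVec]
  -- row identity
  have hrowid : ∀ i, y i = 1 - ∑ j ∈ Finset.univ.erase i, A i j * y j := by
    intro i
    have h1 : (A *ᵥ y) i = 1 := by rw [hsol]; rfl
    have h2 : ∑ j, A i j * y j = 1 := by
      rw [← h1]; simp [Matrix.mulVec, dotProduct]
    have h3 : A i i * y i + ∑ j ∈ Finset.univ.erase i, A i j * y j = ∑ j, A i j * y j :=
      Finset.add_sum_erase _ (fun j => A i j * y j) (Finset.mem_univ i)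
    rw [hdiag i, one_mul, h2] at h3
    linarith
  set M : ℝ := Finset.univ.sup' Finset.univ_nonempty fun i => |y i| with hM
  have hMle : ∀ i, |y i| ≤ M := fun i => Finset.le_sup' (fun i => |y i|) (Finset.mem_univ i)
  obtain ⟨i₀, -, hi₀⟩ := Finset.exists_mem_eq_sup' Finset.univ_nonempty fun i => |y i|
  have hM0 : 0 ≤ M := by rw [hM, hi₀]; exact abs_nonneg _
  have hsum : ∀ i, ∑ j ∈ Finset.univ.erase i, |A i j * y j| ≤ 1/4 * M := by
    intro i
    have h1 : ∀ j ∈ Finset.univ.erase i, |A i j * y j| ≤ ‖A i j‖ * M := by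
      intro j hj
      rw [abs_mul, Real.norm_eq_abs]
      exact mul_le_mul_of_nonneg_left (hMle j) (abs_nonneg _)
    calc ∑ j ∈ Finset.univ.erase i, |A i j * y j|
        ≤ ∑ j ∈ Finset.univ.erase i, ‖A i j‖ * M := Finset.sum_le_sum h1
      _ = (∑ j ∈ Finset.univ.erase i, ‖A i j‖) * M := by rw [Finset.sum_mul]
      _ ≤ 1/4 * M := mul_le_mul_of_nonneg_right (hrow i) hM0
  have hM43 : M ≤ 4/3 := by
    have h1 := hrowid i₀
    have h2 : |y i₀| ≤ 1 + ∑ j ∈ Finset.univ.erase i₀, |A i₀ j * y j| := by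
      rw [h1]
      calc |1 - ∑ j ∈ Finset.univ.erase i₀, A i₀ j * y j|
          ≤ |(1:ℝ)| + |∑ j ∈ Finset.univ.erase i₀, A i₀ j * y j| := abs_sub _ _
        _ ≤ 1 + ∑ j ∈ Finset.univ.erase i₀, |A i₀ j * y j| := by
            rw [abs_one]
            exact add_le_add_right (Finset.abs_sum_le_sum_abs _ _) 1
    have h3 := hsum i₀
    have h4 : M = |y i₀| := hi₀
    linarith
  have hpos : ∀ i, 0 < y i := by
    intro i
    have h1 := hrowid i
    have h2 : ∑ j ∈ Finset.univ.erase i, A i j * y j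
        ≤ ∑ j ∈ Finset.univ.erase i, |A i j * y j| :=
      Finset.sum_le_sum fun j _ => le_abs_self _
    have h3 := hsum i
    rw [h1]
    linarith
  exact ⟨hdet, y, ⟨hpos, hsol⟩, fun z hz => huniq z hz.2⟩
theorem statement7 (d m : ℕ) (hd : 2 ≤ d) (R : FacetRep d m)
    (V : Finset (E d)) (hV : (↑V : Set (E d)) = vertices R.P) :
    ∃ k₀ : ℕ, ∀ k ≥ k₀, (R.Ak V k).det ≠ 0 ∧
      ∃! y : ↥V → ℝ, (∀ v, 0 < y v) ∧ R.Ak V k *ᵥ y = 1 ∧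
        ∀ w : ↥V, R.fk V y k w.1 = 1 := by
  classical
  rcases eq_or_ne V ∅ with hVe | hVne
  · subst hVe
    haveI : IsEmpty ↥(∅ : Finset (E d)) := Finset.isEmpty_coe_sort.2 rfl
    refine ⟨0, fun k _ => ⟨by simp [Matrix.det_isEmpty], 0,
      ⟨fun v => isEmptyElim v, funext fun v => isEmptyElim v, fun w => isEmptyElim w⟩,
      fun y' _ => funext fun v => isEmptyElim v⟩⟩
  · have hVne' : V.Nonempty := Finset.nonempty_iff_ne_empty.2 hVne
    haveI : Nonempty ↥V := by obtain ⟨x, hx⟩ := hVne'; exact ⟨⟨x, hx⟩⟩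
    have hdiam : 0 < Metric.diam R.P := diam_pos R (by omega)
    have hvert : ∀ v : ↥V, (v : E d) ∈ vertices R.P := fun v => by
      have h := v.2
      have : (v : E d) ∈ (↑V : Set (E d)) := h
      rwa [hV] at this
    have hmemP : ∀ v : ↥V, (v : E d) ∈ R.P := fun v => extremePoints_subset (hvert v)
    have hact : ∀ v : ↥V, (R.act (v : E d)).Nonempty := fun v =>
      act_nonempty R (by omega) hdiam (hvert v)
    have hm : 0 < m := (hact (Classical.arbitrary _)).choose.pos
    have hmR : (1:ℝ) ≤ (m:ℝ) := by exact_mod_cast hm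
    have hsep : ∀ w v : ↥V, w ≠ v → ∃ j ∈ R.act (v : E d), 0 < R.q (w : E d) j := by
      intro w v hne
      exact exists_pos_q R hdiam (hvert v) (hmemP w) fun h => hne (Subtype.ext h)
    set F : Finset ℝ := ((V ×ˢ V).biUnion fun p =>
      Finset.univ.image fun j : Fin m => R.q p.1 j).filter (fun a => 0 < a) with hFdef
    set δ : ℝ := if hF : F.Nonempty then F.min' hF else 1 with hδdef
    have hmemVP : ∀ x ∈ V, x ∈ R.P := fun x hx => by
      have : x ∈ (↑V : Set (E d)) := hx
      rw [hV] at this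
      exact extremePoints_subset this
    have hFle1 : ∀ a ∈ F, a ≤ 1 := by
      intro a ha
      obtain ⟨hab, -⟩ := Finset.mem_filter.1 ha
      obtain ⟨p, hp, hai⟩ := Finset.mem_biUnion.1 hab
      obtain ⟨j, -, rfl⟩ := Finset.mem_image.1 hai
      exact q_le_one R hdiam (hmemVP p.1 (Finset.mem_product.1 hp).1) j
    have hδpos : 0 < δ := by
      rw [hδdef]
      split_ifs with hF
      · exact (Finset.mem_filter.1 (F.min'_mem hF)).2
      · norm_num
    have hδ1 : δ ≤ 1 := by
      rw [hδdef]
      split_ifs with hF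
      · exact hFle1 _ (F.min'_mem hF)
      · exact le_rfl
    have hδle : ∀ w v : ↥V, w ≠ v → ∃ j ∈ R.act (v : E d), 1 - R.q (w : E d) j ≤ 1 - δ := by
      intro w v hne
      obtain ⟨j, hj, hjpos⟩ := hsep w v hne
      have hmemF : R.q (w : E d) j ∈ F := by
        rw [hFdef]
        refine Finset.mem_filter.2 ⟨Finset.mem_biUnion.2 ⟨((w : E d), (v : E d)),
          Finset.mem_product.2 ⟨w.2, v.2⟩, Finset.mem_image.2 ⟨j, Finset.mem_univ _, rfl⟩⟩, hjpos⟩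
      have hF : F.Nonempty := ⟨_, hmemF⟩
      have hδle' : δ ≤ R.q (w : E d) j := by
        rw [hδdef, dif_pos hF]
        exact Finset.min'_le _ _ hmemF
      exact ⟨j, hj, by linarith⟩
    set r : ℝ := 1 - δ with hrdef
    have hr0 : 0 ≤ r := by rw [hrdef]; linarith
    have hr1 : r < 1 := by rw [hrdef]; linarith
    set b : ℝ := 1 - 1/(2*(m:ℝ)) with hbdef
    have hb0 : 0 ≤ b := by
      rw [hbdef]
      have h : (1:ℝ)/(2*(m:ℝ)) ≤ 1/2 := by
        rw [div_le_div_iff₀ (by positivity) (by norm_num)]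
        linarith
      linarith
    have hb1 : b < 1 := by
      rw [hbdef]
      have h : (0:ℝ) < 1/(2*(m:ℝ)) := by positivity
      linarith
    set n : ℕ := V.card with hndef
    have hn1 : 0 < n := Finset.card_pos.2 hVne'
    set ε : ℝ := (4 * (n:ℝ))⁻¹ with hεdef
    have hε0 : 0 < ε := by
      have : (0:ℝ) < n := by exact_mod_cast hn1
      positivity
    obtain ⟨k₁, hk₁⟩ := Filter.eventually_atTop.1
      ((tendsto_pow_atTop_nhds_zero_of_lt_one hr0 hr1).eventually
        (eventually_le_nhds (by norm_num : (0:ℝ) < 1/2)))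
    obtain ⟨k₂, hk₂⟩ := Filter.eventually_atTop.1
      ((tendsto_pow_atTop_nhds_zero_of_lt_one hb0 hb1).eventually
        (eventually_le_nhds hε0))
    refine ⟨max k₁ k₂, fun k hk => ?_⟩
    have hkk₁ : k₁ ≤ 2*k := le_trans (le_trans (le_max_left k₁ k₂) hk) (by omega)
    have hkk₂ : k₂ ≤ 2*k := le_trans (le_trans (le_max_right k₁ k₂) hk) (by omega)
    -- diagonal entries are 1
    have hdiag : ∀ v : ↥V, R.Ak V k v v = 1 := by
      intro v
      have hcard : (((R.act (v : E d)).card : ℝ)) ≠ 0 := by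
        exact_mod_cast (hact v).card_pos.ne'
      show ((∑ j ∈ R.act (v : E d), (1 - R.q (v : E d) j)^(2*k)) /
          ((R.act (v : E d)).card : ℝ))^(2*k) = 1
      have h1 : ∀ j ∈ R.act (v : E d), (1 - R.q (v : E d) j)^(2*k) = 1 := by
        intro j hj
        have h2 : R.q (v : E d) j = 0 := (Finset.mem_filter.1 hj).2
        rw [h2, sub_zero, one_pow]
      rw [Finset.sum_congr rfl h1, Finset.sum_const, nsmul_eq_mul, mul_one,
        div_self hcard, one_pow]
    have h0 : ∀ w v : ↥V, 0 ≤ R.Ak V k w v := fun w v =>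
      Even.pow_nonneg (even_two_mul k) _
    have hsm : ∀ w v : ↥V, w ≠ v → R.Ak V k w v ≤ ε := by
      intro w v hne
      obtain ⟨j₀, hj₀, hj₀r⟩ := hδle w v hne
      set c : ℕ := (R.act (v : E d)).card with hc
      have hc1 : 0 < c := (hact v).card_pos
      have hcR : (0:ℝ) < c := by exact_mod_cast hc1
      have hcm : (c:ℝ) ≤ (m:ℝ) := by
        have h := Finset.card_le_univ (R.act (v : E d))
        rw [Fintype.card_fin] at h
        exact_mod_cast h
      have hq01 : ∀ j, 0 ≤ 1 - R.q (w : E d) j ∧ 1 - R.q (w : E d) j ≤ 1 := fun j =>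
        ⟨by linarith [q_le_one R hdiam (hmemP w) j], by linarith [q_nonneg R (hmemP w) j]⟩
      have hterm : ∀ j ∈ R.act (v : E d), (1 - R.q (w : E d) j)^(2*k) ≤ 1 := fun j _ =>
        pow_le_one₀ (hq01 j).1 (hq01 j).2
      have hS : ∑ j ∈ R.act (v : E d), (1 - R.q (w : E d) j)^(2*k) ≤ ((c:ℝ) - 1) + r^(2*k) := by
        rw [← Finset.add_sum_erase _ _ hj₀]
        have h1 : (1 - R.q (w : E d) j₀)^(2*k) ≤ r^(2*k) :=
          pow_le_pow_left₀ (hq01 j₀).1 hj₀r _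
        have h2 : ∑ j ∈ (R.act (v : E d)).erase j₀, (1 - R.q (w : E d) j)^(2*k)
            ≤ ((R.act (v : E d)).erase j₀).card • (1:ℝ) :=
          Finset.sum_le_card_nsmul _ _ _ fun j hj => hterm j (Finset.mem_of_mem_erase hj)
        have h3 : (((R.act (v : E d)).erase j₀).card : ℝ) = (c:ℝ) - 1 := by
          rw [Finset.card_erase_of_mem hj₀, Nat.cast_sub hc1]
          simp
        rw [nsmul_eq_mul, h3, mul_one] at h2
        linarith
      have hS0 : (0:ℝ) ≤ ∑ j ∈ R.act (v : E d), (1 - R.q (w : E d) j)^(2*k) :=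
        Finset.sum_nonneg fun j _ => pow_nonneg (hq01 j).1 _
      have hrk : r^(2*k) ≤ 1/2 := hk₁ (2*k) hkk₁
      have hbase : (∑ j ∈ R.act (v : E d), (1 - R.q (w : E d) j)^(2*k)) / (c:ℝ) ≤ b := by
        rw [div_le_iff₀ hcR]
        have heq : b * (c:ℝ) = (c:ℝ) - (c:ℝ)/(2*(m:ℝ)) := by rw [hbdef]; ring
        have hc2m : (c:ℝ)/(2*(m:ℝ)) ≤ 1/2 := by
          rw [div_le_iff₀ (by positivity)]
          linarith
        calc ∑ j ∈ R.act (v : E d), (1 - R.q (w : E d) j)^(2*k)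
            ≤ ((c:ℝ) - 1) + r^(2*k) := hS
          _ ≤ (c:ℝ) - 1/2 := by linarith
          _ ≤ (c:ℝ) - (c:ℝ)/(2*(m:ℝ)) := by linarith
          _ = b * (c:ℝ) := heq.symm
      have hbase0 : (0:ℝ) ≤ (∑ j ∈ R.act (v : E d), (1 - R.q (w : E d) j)^(2*k)) / (c:ℝ) :=
        div_nonneg hS0 hcR.le
      have hAk : R.Ak V k w v = ((∑ j ∈ R.act (v : E d), (1 - R.q (w : E d) j)^(2*k)) /
          (c:ℝ))^(2*k) := rfl
      rw [hAk]
      calc ((∑ j ∈ R.act (v : E d), (1 - R.q (w : E d) j)^(2*k)) / (c:ℝ))^(2*k)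
          ≤ b^(2*k) := pow_le_pow_left₀ hbase0 hbase _
        _ ≤ ε := hk₂ (2*k) hkk₂
    have hcardcoe : (Fintype.card ↥V : ℝ) = (n : ℝ) := by
      rw [Fintype.card_coe]
    obtain ⟨hdet, y, ⟨hy1, hy2⟩, hyu⟩ := matrix_aux (R.Ak V k) hdiag h0
      (by intro i j hij; rw [hcardcoe]; exact hsm i j hij)
    have hfk : ∀ (y : ↥V → ℝ) (w : ↥V), R.fk V y k (w : E d) = (R.Ak V k *ᵥ y) w := by
      intro y w
      simp only [FacetRep.fk, FacetRep.Ak, Matrix.mulVec, dotProduct, Matrix.of_apply]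
      exact Finset.sum_congr rfl fun v _ => mul_comm _ _
    refine ⟨hdet, y, ⟨hy1, hy2, fun w => by rw [hfk y w, hy2]; rfl⟩,
      fun z hz => hyu z ⟨hz.1, hz.2.1⟩⟩
end AverkovHenk
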